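/- Fix N ≥ 2, λ ∈ (0, π/2), and j ≥ 2. Then 1 = σ_j(λ_j) + 1 = ũ'(λ_j)((N-1)tan λ_j - f_j(λ_j)) ≥ (c_j - N + 1)·λ_j·tan λ_j, where c_j = (N-2+√((N-2)²+4γ_j))/2 and λ_j is the zero of σ_j; consequently λ_j ≤ arctan(g(j)) for some explicit bound, i.e. λ_j tan λ_j ≤ 1/(c_j - N + 1). -/
import Mathlib

open Real Set Filter Topology

/-- `-u'(λ) ≥ λ`. -/
lemma aux_uprime_bound (N : ℕ) (hN : 2 ≤ N) (u' : ℝ → ℝ) (lamj : ℝ)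
    (hlamj : lamj ∈ Ioo (0:ℝ) (π/2)) (hu0 : u' 0 = 0)
    (hode : ∀ θ ∈ Ioo (-(π/2)) (π/2),
      HasDerivAt (fun s => Real.cos s ^ (N - 1) * u' s) (-(Real.cos θ ^ (N - 1))) θ) :
    u' lamj ≤ -lamj := by
  obtain ⟨h0, h2⟩ := hlamj
  have hsub : Icc (0:ℝ) lamj ⊆ Ioo (-(π/2)) (π/2) := fun t ht =>
    ⟨lt_of_lt_of_le (by linarith [Real.pi_pos]) ht.1, lt_of_le_of_lt ht.2 h2⟩
  have hFTC : ∫ t in (0:ℝ)..lamj, -(Real.cos t ^ (N-1)) =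
      Real.cos lamj ^ (N-1) * u' lamj - Real.cos 0 ^ (N-1) * u' 0 := by
    apply intervalIntegral.integral_eq_sub_of_hasDerivAt
    · intro t ht
      rw [uIcc_of_le h0.le] at ht
      exact hode t (hsub ht)
    · exact (Continuous.intervalIntegrable (by continuity) _ _)
  have hcospos : 0 < Real.cos lamj := Real.cos_pos_of_mem_Ioo ⟨by linarith [Real.pi_pos], h2⟩
  have hmono : lamj * Real.cos lamj ^ (N-1) ≤ ∫ t in (0:ℝ)..lamj, Real.cos t ^ (N-1) := by
    have := intervalIntegral.integral_mono_on (f := fun _ => Real.cos lamj ^ (N-1))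
      (g := fun t => Real.cos t ^ (N-1)) h0.le
      (intervalIntegrable_const (μ := MeasureTheory.volume)) (Continuous.intervalIntegrable (by continuity) _ _)
      (fun t ht => by
        apply pow_le_pow_left₀ hcospos.le
        exact Real.cos_le_cos_of_nonneg_of_le_pi ht.1 (by linarith [Real.pi_pos]) ht.2)
    simpa [smul_eq_mul] using this
  rw [intervalIntegral.integral_neg, hu0, Real.cos_zero, one_pow] at hFTC
  have key : Real.cos lamj ^ (N-1) * u' lamj ≤ -(lamj * Real.cos lamj ^ (N-1)) := by
    linarith [hFTC, hmono]
  have hp : (0:ℝ) < Real.cos lamj ^ (N-1) := pow_pos hcospos _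
  nlinarith [key, hp]

/-- Riccati comparison: `f(λ) ≥ (N-2+j) tan λ`. -/
lemma aux_riccati_bound (N j : ℕ) (hN : 2 ≤ N) (hj : 2 ≤ j) (f : ℝ → ℝ) (lamj : ℝ)
    (hlamj : lamj ∈ Ioo (0:ℝ) (π/2)) (hf0 : f 0 = 0) (hfc : ContinuousOn f (Ico 0 (π/2)))
    (hf : ∀ lam ∈ Ioo (0:ℝ) (π/2),
      HasDerivAt f (-(f lam)^2 + ((N:ℝ) - 1) * Real.tan lam * f lam
        + ((j:ℝ) * ((N:ℝ) - 2 + (j:ℝ))) / (Real.cos lam)^2) lam) :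
    ((N:ℝ) - 2 + (j:ℝ)) * Real.tan lamj ≤ f lamj := by
  obtain ⟨h0, h2⟩ := hlamj
  have hN' : (2:ℝ) ≤ (N:ℝ) := by exact_mod_cast hN
  have hj' : (2:ℝ) ≤ (j:ℝ) := by exact_mod_cast hj
  set c : ℝ := (N:ℝ) - 2 + (j:ℝ) with hc
  have hcpos : 0 < c := by rw [hc]; linarith
  have hIccsub : Icc (0:ℝ) lamj ⊆ Ico 0 (π/2) := fun t ht => ⟨ht.1, lt_of_le_of_lt ht.2 h2⟩
  have hcos : ∀ t ∈ Icc (0:ℝ) lamj, 0 < Real.cos t := fun t ht =>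
    Real.cos_pos_of_mem_Ioo ⟨by linarith [Real.pi_pos, ht.1], lt_of_le_of_lt ht.2 h2⟩
  have htan_cont : ContinuousOn Real.tan (Icc (0:ℝ) lamj) := fun t ht =>
    (Real.continuousAt_tan.mpr (hcos t ht).ne').continuousWithinAt
  have hh_cont : ContinuousOn (fun t => f t - c * Real.tan t) (Icc (0:ℝ) lamj) :=
    (hfc.mono hIccsub).sub (continuousOn_const.mul htan_cont)
  have hψ_cont : ContinuousOn
      (fun t => ((N:ℝ)-1) * Real.tan t - (f t + c * Real.tan t)) (Icc (0:ℝ) lamj) :=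
    (continuousOn_const.mul htan_cont).sub ((hfc.mono hIccsub).add
      (continuousOn_const.mul htan_cont))
  obtain ⟨K, hK⟩ := isCompact_Icc.exists_bound_of_continuousOn hψ_cont
  set φ : ℝ → ℝ := fun t => (f t - c * Real.tan t) * Real.exp (-K * t) with hφdef
  have hφ_cont : ContinuousOn φ (Icc (0:ℝ) lamj) :=
    hh_cont.mul ((Real.continuous_exp.comp (continuous_const.mul continuous_id)).continuousOn)
  by_contra hcon
  push_neg at hcon
  have hφlam : φ lamj < 0 :=
    mul_neg_of_neg_of_pos (by linarith [hcon]) (Real.exp_pos _)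
  set S : Set ℝ := Icc (0:ℝ) lamj ∩ φ ⁻¹' (Ici 0) with hSdef
  have hS_closed : IsClosed S :=
    hφ_cont.preimage_isClosed_of_isClosed isClosed_Icc isClosed_Ici
  have h0S : (0:ℝ) ∈ S := by
    refine ⟨⟨le_refl _, h0.le⟩, ?_⟩
    simp [hφdef, hf0, Real.tan_zero]
  have hS_bdd : BddAbove S := (isCompact_Icc.bddAbove).mono inter_subset_left
  set t₀ : ℝ := sSup S with ht₀def
  have ht₀S : t₀ ∈ S := hS_closed.csSup_mem ⟨0, h0S⟩ hS_bdd
  have ht₀0 : 0 ≤ t₀ := ht₀S.1.1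
  have ht₀lt : t₀ < lamj := lt_of_le_of_ne ht₀S.1.2 (by
    intro h; rw [h] at ht₀S; exact absurd ht₀S.2 (not_le.mpr hφlam))
  have hneg : ∀ t, t₀ < t → t ≤ lamj → φ t < 0 := by
    intro t h1 h2'
    by_contra hge
    push_neg at hge
    have htS : t ∈ S := ⟨⟨le_trans ht₀0 h1.le, h2'⟩, hge⟩
    exact absurd (le_csSup hS_bdd htS) (not_le.mpr h1)
  have hderiv : ∀ x ∈ Ioo t₀ lamj,
      HasDerivAt φ (((-(f x)^2 + ((N:ℝ) - 1) * Real.tan x * f x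
        + ((j:ℝ) * ((N:ℝ) - 2 + (j:ℝ))) / (Real.cos x)^2) - c * (1 / Real.cos x ^ 2))
          * Real.exp (-K * x)
        + (f x - c * Real.tan x) * (Real.exp (-K * x) * (-K))) x := by
    intro x hx
    have hx0 : 0 < x := lt_of_le_of_lt ht₀0 hx.1
    have hxI : x ∈ Ioo (0:ℝ) (π/2) := ⟨hx0, lt_trans hx.2 h2⟩
    have hcosx : 0 < Real.cos x := hcos x ⟨hx0.le, hx.2.le⟩
    have htanx : HasDerivAt Real.tan (1 / Real.cos x ^ 2) x := Real.hasDerivAt_tan hcosx.ne'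
    have hhx := (hf x hxI).sub (htanx.const_mul c)
    have hlin : HasDerivAt (fun t : ℝ => -K * t) (-K) x := by
      simpa using (hasDerivAt_id x).const_mul (-K)
    have hexp : HasDerivAt (fun t => Real.exp (-K * t)) (Real.exp (-K * x) * (-K)) x :=
      hlin.exp
    exact hhx.mul hexp
  have hderiv_nonneg : ∀ x ∈ Ioo t₀ lamj, 0 ≤ deriv φ x := by
    intro x hx
    have hx0 : 0 < x := lt_of_le_of_lt ht₀0 hx.1
    have hcosx : 0 < Real.cos x := hcos x ⟨hx0.le, hx.2.le⟩
    have hφx := hderiv x hx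
    rw [hφx.deriv]
    have hφxneg : φ x < 0 := hneg x hx.1 hx.2.le
    have hhneg : f x - c * Real.tan x < 0 := by
      by_contra hge
      push_neg at hge
      exact absurd (mul_nonneg hge (Real.exp_pos _).le) (not_le.mpr hφxneg)
    have hψK : ((N:ℝ)-1) * Real.tan x - (f x + c * Real.tan x) ≤ K := by
      have := hK x ⟨hx0.le, hx.2.le⟩
      rw [Real.norm_eq_abs] at this
      exact le_trans (le_abs_self _) this
    have h1 : (Real.cos x ^ 2)⁻¹ = 1 + Real.tan x ^ 2 := by
      rw [← Real.inv_one_add_tan_sq hcosx.ne', inv_inv]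
    have hid : ((-(f x)^2 + ((N:ℝ) - 1) * Real.tan x * f x
        + ((j:ℝ) * ((N:ℝ) - 2 + (j:ℝ))) / (Real.cos x)^2) - c * (1 / Real.cos x ^ 2))
        - K * (f x - c * Real.tan x)
        = (((N:ℝ)-1) * Real.tan x - (f x + c * Real.tan x) - K) * (f x - c * Real.tan x)
          + ((j:ℝ) * c - c) := by
      rw [div_eq_mul_inv, one_div, h1, hc]; ring
    have t1 : 0 ≤ (((N:ℝ)-1) * Real.tan x - (f x + c * Real.tan x) - K)
        * (f x - c * Real.tan x) := by
      have := mul_nonneg (neg_nonneg.2 (by linarith :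
        ((N:ℝ)-1) * Real.tan x - (f x + c * Real.tan x) - K ≤ 0)) (neg_nonneg.2 hhneg.le)
      rw [neg_mul_neg] at this
      exact this
    have t2 : 0 ≤ (j:ℝ) * c - c := by nlinarith
    have t3 : 0 ≤ ((-(f x)^2 + ((N:ℝ) - 1) * Real.tan x * f x
        + ((j:ℝ) * ((N:ℝ) - 2 + (j:ℝ))) / (Real.cos x)^2) - c * (1 / Real.cos x ^ 2))
        - K * (f x - c * Real.tan x) := by rw [hid]; linarith
    have heq : ((-(f x)^2 + ((N:ℝ) - 1) * Real.tan x * f x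
        + ((j:ℝ) * ((N:ℝ) - 2 + (j:ℝ))) / (Real.cos x)^2) - c * (1 / Real.cos x ^ 2))
          * Real.exp (-K * x)
        + (f x - c * Real.tan x) * (Real.exp (-K * x) * (-K))
        = Real.exp (-K * x) * (((-(f x)^2 + ((N:ℝ) - 1) * Real.tan x * f x
        + ((j:ℝ) * ((N:ℝ) - 2 + (j:ℝ))) / (Real.cos x)^2) - c * (1 / Real.cos x ^ 2))
        - K * (f x - c * Real.tan x)) := by ring
    rw [heq]
    exact mul_nonneg (Real.exp_pos _).le t3
  have hmono : MonotoneOn φ (Icc t₀ lamj) := by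
    apply monotoneOn_of_deriv_nonneg (convex_Icc _ _)
    · exact hφ_cont.mono (Icc_subset_Icc ht₀0 le_rfl)
    · rw [interior_Icc]
      intro x hx
      exact (hderiv x hx).differentiableAt.differentiableWithinAt
    · rw [interior_Icc]
      exact hderiv_nonneg
  have := hmono (left_mem_Icc.mpr ht₀lt.le) (right_mem_Icc.mpr ht₀lt.le) ht₀lt.le
  have hφt₀ : (0:ℝ) ≤ φ t₀ := ht₀S.2
  linarith [hφlam]

/-- At the zero `λⱼ` of `σⱼ` one has
`1 = ũ'(λⱼ)((N-1)tan λⱼ - fⱼ(λⱼ)) ≥ (cⱼ - N + 1) λⱼ tan λⱼ`, where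
`cⱼ = (N-2+√((N-2)²+4γⱼ))/2`; in particular `λⱼ tan λⱼ ≤ 1/(cⱼ - N + 1)`. -/
theorem bifurcation_value_quantitative_bound (N j : ℕ) (hN : 2 ≤ N) (hj : 2 ≤ j)
    (u u' f : ℝ → ℝ) (lamj : ℝ) (hlamj : lamj ∈ Ioo (0:ℝ) (π/2))
    (hu0 : u' 0 = 0)
    (hu : ∀ θ ∈ Ioo (-(π/2)) (π/2), HasDerivAt u (u' θ) θ)
    (hode : ∀ θ ∈ Ioo (-(π/2)) (π/2),
      HasDerivAt (fun s => Real.cos s ^ (N - 1) * u' s) (-(Real.cos θ ^ (N - 1))) θ)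
    (hf0 : f 0 = 0) (hfc : ContinuousOn f (Ico 0 (π/2)))
    (hf : ∀ lam ∈ Ioo (0:ℝ) (π/2),
      HasDerivAt f (-(f lam)^2 + ((N:ℝ) - 1) * Real.tan lam * f lam
        + ((j:ℝ) * ((N:ℝ) - 2 + (j:ℝ))) / (Real.cos lam)^2) lam)
    (hzero : u' lamj * (((N:ℝ) - 1) * Real.tan lamj - f lamj) - 1 = 0) :
    u' lamj * (((N:ℝ) - 1) * Real.tan lamj - f lamj) = 1 ∧
    ((((N:ℝ) - 2 + Real.sqrt (((N:ℝ) - 2)^2 + 4 * ((j:ℝ) * ((N:ℝ) - 2 + (j:ℝ))))) / 2)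
        - (N:ℝ) + 1) * (lamj * Real.tan lamj) ≤ 1 ∧
    lamj * Real.tan lamj ≤
      1 / ((((N:ℝ) - 2 + Real.sqrt (((N:ℝ) - 2)^2 + 4 * ((j:ℝ) * ((N:ℝ) - 2 + (j:ℝ))))) / 2)
        - (N:ℝ) + 1) := by
  have hN' : (2:ℝ) ≤ (N:ℝ) := by exact_mod_cast hN
  have hj' : (2:ℝ) ≤ (j:ℝ) := by exact_mod_cast hj
  obtain ⟨h0, h2⟩ := hlamj
  have hsqrt : Real.sqrt (((N:ℝ) - 2)^2 + 4 * ((j:ℝ) * ((N:ℝ) - 2 + (j:ℝ))))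
      = (N:ℝ) - 2 + 2 * (j:ℝ) := by
    rw [show ((N:ℝ) - 2)^2 + 4 * ((j:ℝ) * ((N:ℝ) - 2 + (j:ℝ)))
      = ((N:ℝ) - 2 + 2 * (j:ℝ))^2 from by ring]
    exact Real.sqrt_sq (by linarith)
  have h1 : u' lamj * (((N:ℝ) - 1) * Real.tan lamj - f lamj) = 1 := by linarith
  have hA := aux_uprime_bound N hN u' lamj ⟨h0, h2⟩ hu0 hode
  have hB := aux_riccati_bound N j hN hj f lamj ⟨h0, h2⟩ hf0 hfc hf
  have htanpos : 0 < Real.tan lamj := Real.tan_pos_of_pos_of_lt_pi_div_two h0 h2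
  have e1 : ((j:ℝ) - 1) * Real.tan lamj ≤ f lamj - ((N:ℝ) - 1) * Real.tan lamj := by
    nlinarith [hB, htanpos]
  have key2 : ((j:ℝ) - 1) * (lamj * Real.tan lamj) ≤ 1 := by
    have hmul := mul_le_mul (show lamj ≤ -u' lamj by linarith) e1 (by nlinarith) (by linarith)
    have hre : (-u' lamj) * (f lamj - ((N:ℝ) - 1) * Real.tan lamj)
        = u' lamj * (((N:ℝ) - 1) * Real.tan lamj - f lamj) := by ring
    nlinarith [hmul, h1, hre]
  refine ⟨h1, ?_, ?_⟩
  · rw [hsqrt, show ((N:ℝ) - 2 + ((N:ℝ) - 2 + 2 * (j:ℝ))) / 2 - (N:ℝ) + 1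
      = (j:ℝ) - 1 from by ring]
    exact key2
  · rw [hsqrt, show ((N:ℝ) - 2 + ((N:ℝ) - 2 + 2 * (j:ℝ))) / 2 - (N:ℝ) + 1
      = (j:ℝ) - 1 from by ring, le_div_iff₀ (show (0:ℝ) < (j:ℝ) - 1 by linarith)]
    nlinarith [key2]
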